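/- Let $P$ be a $\pi$-reversible Markov kernel on a measurable space, with conductance profile $\Phi_P(v) := \inf\{(\pi\otimes P)(A\times A^\complement)/\pi(A) : \pi(A)\le v\}$ and spectral profile $\Lambda_P(v) := \inf\{\lambda_P(A): \pi(A)\le v\}$ where $\lambda_P(A) = \inf\{\mathcal{E}(P,g)/\mathrm{Var}_\pi(g) : g \ge 0, \mathrm{supp}\,g \subseteq A, g \text{ non-constant}\}$. Then for $0 < v \le 1/2$, $\Lambda_P(v) \ge \frac{1}{2}\Phi_P(v)^2$. -/

import Mathlib

open MeasureTheory ProbabilityTheory Real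
open scoped ENNReal

noncomputable section

variable {E : Type*} [MeasurableSpace E]

/-- The Dirichlet form `𝓔(P,g) = ½ ∫∫ (g(y)-g(x))² P(x,dy) π(dx)`. -/
def dirichletForm (pm : Measure E) (P : Kernel E E) (g : E → ℝ) : ℝ :=
  (1 / 2) * ∫ x, ∫ y, (g y - g x) ^ 2 ∂(P x) ∂pm

/-- The variance of `g` under `pm`. -/
def var' (pm : Measure E) (g : E → ℝ) : ℝ :=
  ∫ x, (g x - ∫ y, g y ∂pm) ^ 2 ∂pm

/-- The conductance profile `Φ_P(v)`. -/
def condProfile (pm : Measure E) (P : Kernel E E) (v : ℝ) : ℝ :=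
  sInf {r | ∃ A : Set E, MeasurableSet A ∧ 0 < pm A ∧ (pm A).toReal ≤ v ∧
    r = (∫⁻ x in A, P x Aᶜ ∂pm).toReal / (pm A).toReal}

/-- The spectral profile `Λ_P(v)`, the infimum over sets `A` with `π(A) ≤ v` of the
infimum of `𝓔(P,g)/Var_π(g)` over nonnegative, non-constant `g` supported in `A`. -/
def specProfile (pm : Measure E) (P : Kernel E E) (v : ℝ) : ℝ :=
  sInf {r | ∃ A : Set E, MeasurableSet A ∧ (pm A).toReal ≤ v ∧
    ∃ g : E → ℝ, Measurable g ∧ MemLp g 2 pm ∧ (∀ x, 0 ≤ g x) ∧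
      Function.support g ⊆ A ∧ 0 < var' pm g ∧
      r = dirichletForm pm P g / var' pm g}

/- ### Auxiliary lemmas -/

lemma aux_var'_eq (pm : Measure E) [IsProbabilityMeasure pm] {g : E → ℝ}
    (hg : MemLp g 2 pm) :
    var' pm g = (∫ x, g x ^ 2 ∂pm) - (∫ x, g x ∂pm) ^ 2 := by
  have h1 : var' pm g = variance g pm := by
    rw [variance_eq_integral hg.aemeasurable, var']
  rw [h1, variance_eq_sub hg]
  congr 1

lemma aux_bind (pm : Measure E) [IsProbabilityMeasure pm] (P : Kernel E E) [IsMarkovKernel P]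
    (hrev : ∀ A B : Set E, MeasurableSet A → MeasurableSet B →
      ∫⁻ x in A, P x B ∂pm = ∫⁻ x in B, P x A ∂pm) :
    pm.bind ⇑P = pm := by
  ext s hs
  rw [Measure.bind_apply hs P.measurable.aemeasurable]
  have h := hrev s Set.univ hs MeasurableSet.univ
  simp only [measure_univ, setLIntegral_one, Measure.restrict_univ] at h
  exact h.symm

lemma aux_tonelli (μ : Measure (E × E)) [IsFiniteMeasure μ] {h : E → ℝ} (hh : Measurable h) :
    ∫⁻ z, ENNReal.ofReal (h z.2 - h z.1) ∂μ
      = ∫⁻ t, μ ({x | h x ≤ t} ×ˢ {x | t < h x}) := by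
  have hS : MeasurableSet {p : (E × E) × ℝ | h p.1.1 ≤ p.2 ∧ p.2 < h p.1.2} := by
    apply MeasurableSet.inter
    · exact measurableSet_le (hh.comp (measurable_fst.comp measurable_fst)) measurable_snd
    · exact measurableSet_lt measurable_snd (hh.comp (measurable_snd.comp measurable_fst))
  have key : ∀ z : E × E, ENNReal.ofReal (h z.2 - h z.1)
      = ∫⁻ t, {p : (E × E) × ℝ | h p.1.1 ≤ p.2 ∧ p.2 < h p.1.2}.indicator
          (fun _ => (1:ℝ≥0∞)) (z, t) := by
    intro z
    rw [← Real.volume_Ico (a := h z.1) (b := h z.2),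
      ← one_mul (volume (Set.Ico (h z.1) (h z.2))),
      ← lintegral_indicator_const measurableSet_Ico 1]
    apply lintegral_congr
    intro t
    by_cases ht : h z.1 ≤ t ∧ t < h z.2 <;>
      simp [Set.indicator_apply, Set.mem_Ico, ht]
  simp_rw [key]
  rw [lintegral_lintegral_swap]
  · apply lintegral_congr
    intro t
    have : (fun z : E × E => ({p : (E × E) × ℝ | h p.1.1 ≤ p.2 ∧ p.2 < h p.1.2}).indicator
          (fun _ => (1:ℝ≥0∞)) (z, t))
        = ({x | h x ≤ t} ×ˢ {x | t < h x} : Set (E × E)).indicator (fun _ => (1:ℝ≥0∞)) := by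
      funext z
      by_cases hz : h z.1 ≤ t ∧ t < h z.2 <;>
        simp [Set.indicator_apply, Set.mem_prod, hz]
    rw [this, lintegral_indicator_const (MeasurableSet.prod
      (measurableSet_le hh measurable_const) (measurableSet_lt measurable_const hh)), one_mul]
  · exact ((measurable_const.indicator hS).comp measurable_id).aemeasurable

lemma aux_tonelli' (μ : Measure (E × E)) [IsFiniteMeasure μ] {h : E → ℝ} (hh : Measurable h) :
    ∫⁻ z, ENNReal.ofReal (h z.1 - h z.2) ∂μ
      = ∫⁻ t, μ ({x | t < h x} ×ˢ {x | h x ≤ t}) := by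
  have hS : MeasurableSet {p : (E × E) × ℝ | h p.1.2 ≤ p.2 ∧ p.2 < h p.1.1} := by
    apply MeasurableSet.inter
    · exact measurableSet_le (hh.comp (measurable_snd.comp measurable_fst)) measurable_snd
    · exact measurableSet_lt measurable_snd (hh.comp (measurable_fst.comp measurable_fst))
  have key : ∀ z : E × E, ENNReal.ofReal (h z.1 - h z.2)
      = ∫⁻ t, {p : (E × E) × ℝ | h p.1.2 ≤ p.2 ∧ p.2 < h p.1.1}.indicator
          (fun _ => (1:ℝ≥0∞)) (z, t) := by
    intro z
    rw [← Real.volume_Ico (a := h z.2) (b := h z.1),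
      ← one_mul (volume (Set.Ico (h z.2) (h z.1))),
      ← lintegral_indicator_const measurableSet_Ico 1]
    apply lintegral_congr
    intro t
    by_cases ht : h z.2 ≤ t ∧ t < h z.1 <;>
      simp [Set.indicator_apply, Set.mem_Ico, ht]
  simp_rw [key]
  rw [lintegral_lintegral_swap]
  · apply lintegral_congr
    intro t
    have : (fun z : E × E => ({p : (E × E) × ℝ | h p.1.2 ≤ p.2 ∧ p.2 < h p.1.1}).indicator
          (fun _ => (1:ℝ≥0∞)) (z, t))
        = ({x | t < h x} ×ˢ {x | h x ≤ t} : Set (E × E)).indicator (fun _ => (1:ℝ≥0∞)) := by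
      funext z
      by_cases hz : h z.2 ≤ t ∧ t < h z.1 <;>
        simp [Set.indicator_apply, Set.mem_prod, hz, and_comm]
    rw [this, lintegral_indicator_const (MeasurableSet.prod
      (measurableSet_lt measurable_const hh) (measurableSet_le hh measurable_const)), one_mul]
  · exact ((measurable_const.indicator hS).comp measurable_id).aemeasurable

lemma aux_main (pm : Measure E) [IsProbabilityMeasure pm] (P : Kernel E E) [IsMarkovKernel P]
    (hrev : ∀ A B : Set E, MeasurableSet A → MeasurableSet B →
      ∫⁻ x in A, P x B ∂pm = ∫⁻ x in B, P x A ∂pm)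
    {v : ℝ} {A : Set E} (hA : MeasurableSet A) (hAv : (pm A).toReal ≤ v)
    {g : E → ℝ} (hg : Measurable g) (hgL2 : MemLp g 2 pm)
    (hg0 : ∀ x, 0 ≤ g x) (hsupp : Function.support g ⊆ A) (hvar : 0 < var' pm g) :
    (1 / 2) * condProfile pm P v ^ 2 ≤ dirichletForm pm P g / var' pm g := by
  set Φ := condProfile pm P v with hΦdef
  have hΦ0 : 0 ≤ Φ := by
    apply Real.sInf_nonneg
    rintro r ⟨B, _, _, _, hrB⟩
    exact hrB ▸ div_nonneg ENNReal.toReal_nonneg ENNReal.toReal_nonneg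
  set μ := pm ⊗ₘ P with hμdef
  have hg2int : Integrable (fun x => g x ^ 2) pm := hgL2.integrable_sq
  set I := ∫⁻ x, ENNReal.ofReal (g x ^ 2) ∂pm with hIdef
  have hIeq : I = ENNReal.ofReal (∫ x, g x ^ 2 ∂pm) :=
    (ofReal_integral_eq_lintegral_ofReal hg2int (ae_of_all _ fun x => sq_nonneg _)).symm
  have hIfin : I ≠ ∞ := by rw [hIeq]; exact ENNReal.ofReal_ne_top
  have hvarle : var' pm g ≤ ∫ x, g x ^ 2 ∂pm := by
    rw [aux_var'_eq pm hgL2]; exact sub_le_self _ (sq_nonneg _)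
  have hIpos : I ≠ 0 := by
    rw [hIeq, ne_eq, ENNReal.ofReal_eq_zero, not_le]; linarith
  have hItoReal : I.toReal = ∫ x, g x ^ 2 ∂pm := by
    rw [hIeq, ENNReal.toReal_ofReal (le_trans hvar.le hvarle)]
  -- lintegrals of coordinate functions
  have hfst : ∀ f : E → ℝ≥0∞, Measurable f → ∫⁻ z, f z.1 ∂μ = ∫⁻ x, f x ∂pm := by
    intro f hf
    rw [hμdef, Measure.lintegral_compProd (f := fun z : E × E => f z.1) (hf.comp measurable_fst)]
    simp
  have hsnd : ∀ f : E → ℝ≥0∞, Measurable f → ∫⁻ z, f z.2 ∂μ = ∫⁻ x, f x ∂pm := by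
    intro f hf
    rw [hμdef, Measure.lintegral_compProd (f := fun z : E × E => f z.2) (hf.comp measurable_snd)]
    rw [← Measure.lintegral_bind P.measurable.aemeasurable hf.aemeasurable, aux_bind pm P hrev]
  set D := ∫⁻ z : E × E, ENNReal.ofReal ((g z.2 - g z.1) ^ 2) ∂μ with hDdef
  have hDmeas : Measurable fun z : E × E => ENNReal.ofReal ((g z.2 - g z.1) ^ 2) :=
    (((hg.comp measurable_snd).sub (hg.comp measurable_fst)).pow_const 2).ennreal_ofReal
  have hgm2 : Measurable fun x => ENNReal.ofReal (g x ^ 2) :=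
    (hg.pow_const 2).ennreal_ofReal
  have hsum_bound : ∀ f : E × E → ℝ,
      (∀ z : E × E, ENNReal.ofReal (f z ^ 2)
        ≤ 2 * ENNReal.ofReal (g z.2 ^ 2) + 2 * ENNReal.ofReal (g z.1 ^ 2)) →
      ∫⁻ z, ENNReal.ofReal (f z ^ 2) ∂μ ≤ 4 * I := by
    intro f hpt
    calc ∫⁻ z, ENNReal.ofReal (f z ^ 2) ∂μ
        ≤ ∫⁻ z : E × E, (2 * ENNReal.ofReal (g z.2 ^ 2) + 2 * ENNReal.ofReal (g z.1 ^ 2)) ∂μ :=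
          lintegral_mono hpt
      _ = 2 * I + 2 * I := by
          have m1 : Measurable (fun z : E × E => (2:ℝ≥0∞) * ENNReal.ofReal (g z.2 ^ 2)) :=
            measurable_const.mul (hgm2.comp measurable_snd)
          have hs2 : ∫⁻ z : E × E, ENNReal.ofReal (g z.2 ^ 2) ∂μ = I := hsnd _ hgm2
          have hf2 : ∫⁻ z : E × E, ENNReal.ofReal (g z.1 ^ 2) ∂μ = I := hfst _ hgm2
          rw [lintegral_add_left m1, lintegral_const_mul' _ _ (by norm_num),
            lintegral_const_mul' _ _ (by norm_num), hs2, hf2]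
      _ = 4 * I := by ring
  have hptD : ∀ z : E × E, ENNReal.ofReal ((g z.2 - g z.1) ^ 2)
      ≤ 2 * ENNReal.ofReal (g z.2 ^ 2) + 2 * ENNReal.ofReal (g z.1 ^ 2) := by
    intro z
    calc ENNReal.ofReal ((g z.2 - g z.1) ^ 2)
        ≤ ENNReal.ofReal (2 * g z.2 ^ 2 + 2 * g z.1 ^ 2) :=
          ENNReal.ofReal_le_ofReal (by nlinarith [sq_nonneg (g z.2 + g z.1)])
      _ = 2 * ENNReal.ofReal (g z.2 ^ 2) + 2 * ENNReal.ofReal (g z.1 ^ 2) := by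
          rw [ENNReal.ofReal_add (by positivity) (by positivity),
            ENNReal.ofReal_mul (by norm_num), ENNReal.ofReal_mul (by norm_num)]
          norm_num
  have hptG : ∀ z : E × E, ENNReal.ofReal ((g z.2 + g z.1) ^ 2)
      ≤ 2 * ENNReal.ofReal (g z.2 ^ 2) + 2 * ENNReal.ofReal (g z.1 ^ 2) := by
    intro z
    calc ENNReal.ofReal ((g z.2 + g z.1) ^ 2)
        ≤ ENNReal.ofReal (2 * g z.2 ^ 2 + 2 * g z.1 ^ 2) :=
          ENNReal.ofReal_le_ofReal (by nlinarith [sq_nonneg (g z.2 - g z.1)])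
      _ = 2 * ENNReal.ofReal (g z.2 ^ 2) + 2 * ENNReal.ofReal (g z.1 ^ 2) := by
          rw [ENNReal.ofReal_add (by positivity) (by positivity),
            ENNReal.ofReal_mul (by norm_num), ENNReal.ofReal_mul (by norm_num)]
          norm_num
  have hDle : D ≤ 4 * I := hsum_bound _ hptD
  have hDfin : D ≠ ∞ :=
    ne_top_of_le_ne_top (ENNReal.mul_ne_top (by norm_num) hIfin) hDle
  set G := ∫⁻ z : E × E, ENNReal.ofReal ((g z.2 + g z.1) ^ 2) ∂μ with hGdef
  have hGle : G ≤ 4 * I := hsum_bound _ hptG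
  -- the function h = g² and the conductance quantity T
  set h : E → ℝ := fun x => g x ^ 2 with hhdef
  have hhm : Measurable h := hg.pow_const 2
  set T := fun t : ℝ => μ ({x | t < h x} ×ˢ {x | h x ≤ t}) with hTdef
  have hsymm : ∀ t : ℝ, μ ({x | h x ≤ t} ×ˢ {x | t < h x}) = T t := by
    intro t
    show (pm ⊗ₘ P) ({x | h x ≤ t} ×ˢ {x | t < h x}) = (pm ⊗ₘ P) ({x | t < h x} ×ˢ {x | h x ≤ t})
    rw [Measure.compProd_apply_prod (measurableSet_le hhm measurable_const)
        (measurableSet_lt measurable_const hhm),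
      Measure.compProd_apply_prod (measurableSet_lt measurable_const hhm)
        (measurableSet_le hhm measurable_const),
      hrev _ _ (measurableSet_le hhm measurable_const) (measurableSet_lt measurable_const hhm)]
  have hN1 : ∫⁻ z : E × E, ENNReal.ofReal (h z.2 - h z.1) ∂μ = ∫⁻ t, T t := by
    rw [aux_tonelli μ hhm]; exact lintegral_congr hsymm
  have hN2 : ∫⁻ z : E × E, ENNReal.ofReal (h z.1 - h z.2) ∂μ = ∫⁻ t, T t :=
    aux_tonelli' μ hhm
  set N := ∫⁻ z : E × E, ENNReal.ofReal |h z.2 - h z.1| ∂μ with hNdef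
  have habs : ∀ x : ℝ, ENNReal.ofReal |x| = ENNReal.ofReal x + ENNReal.ofReal (-x) := by
    intro x
    rcases le_total 0 x with hx | hx
    · rw [abs_of_nonneg hx, ENNReal.ofReal_of_nonpos (neg_nonpos.mpr hx), add_zero]
    · rw [abs_of_nonpos hx, ENNReal.ofReal_of_nonpos hx, zero_add]
  have hNeq : N = 2 * ∫⁻ t, T t := by
    rw [hNdef]
    simp_rw [habs, neg_sub]
    have m1 : Measurable (fun z : E × E => ENNReal.ofReal (h z.2 - h z.1)) :=
      ((hhm.comp measurable_snd).sub (hhm.comp measurable_fst)).ennreal_ofReal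
    rw [lintegral_add_left m1, hN1, hN2, two_mul]
  -- Cauchy-Schwarz upper bound
  have hCS : N ≤ D ^ (1/2 : ℝ) * G ^ (1/2 : ℝ) := by
    have h22 : Real.HolderConjugate 2 2 := ⟨by norm_num, by norm_num, by norm_num⟩
    set f₁ : E × E → ℝ≥0∞ := fun z => ENNReal.ofReal |g z.2 - g z.1| with hf₁
    set f₂ : E × E → ℝ≥0∞ := fun z => ENNReal.ofReal (g z.2 + g z.1) with hf₂
    have hm₁ : Measurable f₁ :=
      (((hg.comp measurable_snd).sub (hg.comp measurable_fst)).abs).ennreal_ofReal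
    have hm₂ : Measurable f₂ :=
      ((hg.comp measurable_snd).add (hg.comp measurable_fst)).ennreal_ofReal
    have hNprod : N = ∫⁻ z, (f₁ * f₂) z ∂μ := by
      apply lintegral_congr
      intro z
      rw [Pi.mul_apply, hf₁, hf₂]
      dsimp only
      rw [← ENNReal.ofReal_mul (abs_nonneg _)]
      congr 1
      have hfac : h z.2 - h z.1 = (g z.2 - g z.1) * (g z.2 + g z.1) := by
        rw [hhdef]; ring
      rw [hfac, abs_mul, abs_of_nonneg (add_nonneg (hg0 _) (hg0 _))]
    have hpow : ∀ x : ℝ, 0 ≤ x → ENNReal.ofReal x ^ (2:ℝ) = ENNReal.ofReal (x ^ 2) := by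
      intro x hx
      rw [ENNReal.ofReal_rpow_of_nonneg hx (by norm_num : (0:ℝ) ≤ 2)]
      congr 1
      rw [show (2:ℝ) = ((2:ℕ):ℝ) by norm_num, Real.rpow_natCast]
    have e1 : ∫⁻ z, f₁ z ^ (2:ℝ) ∂μ = D := by
      apply lintegral_congr
      intro z
      rw [hf₁]
      dsimp only
      rw [hpow _ (abs_nonneg _), sq_abs]
    have e2 : ∫⁻ z, f₂ z ^ (2:ℝ) ∂μ = G := by
      apply lintegral_congr
      intro z
      rw [hf₂]
      dsimp only
      rw [hpow _ (add_nonneg (hg0 _) (hg0 _))]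
    have := ENNReal.lintegral_mul_le_Lp_mul_Lq μ h22 hm₁.aemeasurable hm₂.aemeasurable
    rw [e1, e2] at this
    rw [hNprod]
    exact this
  -- conductance lower bound
  have hlow : ENNReal.ofReal Φ * I ≤ ∫⁻ t, T t := by
    have hlayer : ∫⁻ x, ENNReal.ofReal (h x) ∂pm = ∫⁻ t in Set.Ioi 0, pm {a | t < h a} :=
      lintegral_eq_lintegral_meas_lt pm (ae_of_all _ fun x => sq_nonneg (g x)) hhm.aemeasurable
    have hIeq2 : I = ∫⁻ t in Set.Ioi 0, pm {a | t < h a} := by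
      rw [hIdef, ← hlayer]
    calc ENNReal.ofReal Φ * I
        = ∫⁻ t in Set.Ioi 0, ENNReal.ofReal Φ * pm {a | t < h a} := by
          rw [lintegral_const_mul' _ _ ENNReal.ofReal_ne_top, ← hIeq2]
      _ ≤ ∫⁻ t in Set.Ioi 0, T t := by
          apply lintegral_mono_ae
          rw [ae_restrict_iff' measurableSet_Ioi]
          apply ae_of_all
          intro t ht
          set B := {x | t < h x} with hBdef
          have hB : MeasurableSet B := measurableSet_lt measurable_const hhm
          have hBA : B ⊆ A := by
            intro x hx
            apply hsupp
            intro h0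
            rw [hBdef] at hx
            simp only [Set.mem_setOf_eq, hhdef, h0] at hx
            norm_num at hx
            exact absurd (lt_trans ht hx) (lt_irrefl 0)
          have hTt : T t = ∫⁻ x in B, P x Bᶜ ∂pm := by
            rw [hTdef, hμdef]
            have hcompl : {x | h x ≤ t} = Bᶜ := by
              ext x; simp [hBdef, not_lt]
            dsimp only
            rw [hcompl, Measure.compProd_apply_prod hB hB.compl]
          rcases eq_or_ne (pm B) 0 with hB0 | hB0
          · rw [hB0, mul_zero]; exact bot_le
          · have hBfin : pm B ≠ ∞ := measure_ne_top pm B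
            have hXle : (∫⁻ x in B, P x Bᶜ ∂pm) ≤ pm B := by
              calc (∫⁻ x in B, P x Bᶜ ∂pm) ≤ ∫⁻ _ in B, 1 ∂pm :=
                    lintegral_mono fun x => prob_le_one
                _ = pm B := setLIntegral_one B
            have hXfin : (∫⁻ x in B, P x Bᶜ ∂pm) ≠ ∞ := ne_top_of_le_ne_top hBfin hXle
            have hmem : Φ ≤ (∫⁻ x in B, P x Bᶜ ∂pm).toReal / (pm B).toReal := by
              apply csInf_le
              · refine ⟨0, ?_⟩
                rintro r ⟨C, _, _, _, hrC⟩
                exact hrC ▸ div_nonneg ENNReal.toReal_nonneg ENNReal.toReal_nonneg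
              · exact ⟨B, hB, pos_iff_ne_zero.mpr hB0,
                  le_trans (ENNReal.toReal_mono (measure_ne_top pm A) (measure_mono hBA)) hAv,
                  rfl⟩
            have hBpos : 0 < (pm B).toReal := ENNReal.toReal_pos hB0 hBfin
            calc ENNReal.ofReal Φ * pm B
                ≤ ENNReal.ofReal ((∫⁻ x in B, P x Bᶜ ∂pm).toReal / (pm B).toReal) * pm B :=
                  mul_le_mul_left (ENNReal.ofReal_le_ofReal hmem) _
              _ = (∫⁻ x in B, P x Bᶜ ∂pm) / pm B * pm B := by
                  rw [ENNReal.ofReal_div_of_pos hBpos, ENNReal.ofReal_toReal hXfin,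
                    ENNReal.ofReal_toReal hBfin]
              _ = ∫⁻ x in B, P x Bᶜ ∂pm := ENNReal.div_mul_cancel hB0 hBfin
              _ = T t := hTt.symm
      _ ≤ ∫⁻ t, T t := setLIntegral_le_lintegral _ _
  -- combine
  have hchain : 2 * (ENNReal.ofReal Φ * I) ≤ D ^ (1/2:ℝ) * (4*I) ^ (1/2:ℝ) := by
    calc 2 * (ENNReal.ofReal Φ * I) ≤ 2 * ∫⁻ t, T t := mul_le_mul_right hlow 2
      _ = N := hNeq.symm
      _ ≤ D ^ (1/2:ℝ) * G ^ (1/2:ℝ) := hCS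
      _ ≤ D ^ (1/2:ℝ) * (4*I) ^ (1/2:ℝ) :=
          mul_le_mul_right (ENNReal.rpow_le_rpow hGle (by norm_num)) _
  have hhalf : ∀ x : ℝ≥0∞, x ^ (1/2:ℝ) * x ^ (1/2:ℝ) = x := by
    intro x
    rw [← ENNReal.rpow_add_of_nonneg (1/2 : ℝ) (1/2 : ℝ) (by norm_num) (by norm_num),
      show (1/2 + 1/2 : ℝ) = 1 by norm_num, ENNReal.rpow_one]
  have hsq : 4 * ((ENNReal.ofReal Φ * ENNReal.ofReal Φ * I) * I) ≤ 4 * (D * I) := by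
    calc 4 * ((ENNReal.ofReal Φ * ENNReal.ofReal Φ * I) * I)
        = (2 * (ENNReal.ofReal Φ * I)) * (2 * (ENNReal.ofReal Φ * I)) := by ring
      _ ≤ (D ^ (1/2:ℝ) * (4*I) ^ (1/2:ℝ)) * (D ^ (1/2:ℝ) * (4*I) ^ (1/2:ℝ)) :=
          mul_le_mul' hchain hchain
      _ = (D ^ (1/2:ℝ) * D ^ (1/2:ℝ)) * ((4*I) ^ (1/2:ℝ) * (4*I) ^ (1/2:ℝ)) := by ring
      _ = D * (4*I) := by rw [hhalf, hhalf]
      _ = 4 * (D * I) := by ring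
  have hkey : ENNReal.ofReal Φ * ENNReal.ofReal Φ * I ≤ D := by
    have h1 := (ENNReal.mul_le_mul_iff_right (a := 4) (by norm_num) (by norm_num)).mp hsq
    exact (ENNReal.mul_le_mul_iff_left hIpos hIfin).mp h1
  have hreal : Φ * Φ * I.toReal ≤ D.toReal := by
    have h2 := ENNReal.toReal_mono hDfin hkey
    rwa [ENNReal.toReal_mul, ENNReal.toReal_mul, ENNReal.toReal_ofReal hΦ0] at h2
  -- identify D.toReal with the Dirichlet form
  have hLmeas : Measurable (fun x => ∫⁻ y, ENNReal.ofReal ((g y - g x) ^ 2) ∂P x) :=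
    Measurable.lintegral_kernel_prod_right hDmeas
  have hDrepr : D = ∫⁻ x, ∫⁻ y, ENNReal.ofReal ((g y - g x) ^ 2) ∂P x ∂pm := by
    rw [hDdef, hμdef, Measure.lintegral_compProd hDmeas]
  have hdirich : dirichletForm pm P g = (1/2) * D.toReal := by
    rw [dirichletForm]
    congr 1
    have hae : ∀ᵐ x ∂pm, (∫⁻ y, ENNReal.ofReal ((g y - g x) ^ 2) ∂P x) < ∞ :=
      ae_lt_top hLmeas (hDrepr ▸ hDfin)
    calc ∫ x, ∫ y, (g y - g x) ^ 2 ∂P x ∂pm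
        = ∫ x, (∫⁻ y, ENNReal.ofReal ((g y - g x) ^ 2) ∂P x).toReal ∂pm := by
          apply integral_congr_ae
          apply ae_of_all
          intro x
          have hmx : Measurable fun y => (g y - g x) ^ 2 :=
            (hg.sub measurable_const).pow_const 2
          exact integral_eq_lintegral_of_nonneg_ae (ae_of_all _ fun y => sq_nonneg _)
            hmx.aestronglyMeasurable
      _ = D.toReal := by
          rw [hDrepr]
          exact integral_toReal hLmeas.aemeasurable hae
  -- conclude
  rw [hdirich, le_div_iff₀ hvar]
  have hV : var' pm g ≤ I.toReal := by rw [hItoReal]; exact hvarle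
  nlinarith [hreal, mul_le_mul_of_nonneg_left hV (mul_nonneg hΦ0 hΦ0), hvar]

/-- Cheeger-type bound: the spectral profile dominates half the squared conductance
profile, for `0 < v ≤ 1/2`. -/
theorem stmt5 (pm : Measure E) [IsProbabilityMeasure pm]
    (P : Kernel E E) [IsMarkovKernel P]
    (hrev : ∀ A B : Set E, MeasurableSet A → MeasurableSet B →
      ∫⁻ x in A, P x B ∂pm = ∫⁻ x in B, P x A ∂pm)
    (v : ℝ) (hv0 : 0 < v) (hv : v ≤ 1 / 2) :
    (1 / 2) * condProfile pm P v ^ 2 ≤ specProfile pm P v := by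
  by_cases hne : {r | ∃ A : Set E, MeasurableSet A ∧ (pm A).toReal ≤ v ∧
      ∃ g : E → ℝ, Measurable g ∧ MemLp g 2 pm ∧ (∀ x, 0 ≤ g x) ∧
        Function.support g ⊆ A ∧ 0 < var' pm g ∧
        r = dirichletForm pm P g / var' pm g}.Nonempty
  · rw [specProfile]
    apply le_csInf hne
    rintro r ⟨A, hA, hAv, g, hgm, hgL2, hg0, hsupp, hvar, rfl⟩
    exact aux_main pm P hrev hA hAv hgm hgL2 hg0 hsupp hvar
  · have hempty : specProfile pm P v = 0 := by
      rw [specProfile, Set.not_nonempty_iff_eq_empty.mp hne, Real.sInf_empty]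
    rw [hempty]
    have hcond : condProfile pm P v = 0 := by
      rw [condProfile]
      have : {r | ∃ A : Set E, MeasurableSet A ∧ 0 < pm A ∧ (pm A).toReal ≤ v ∧
          r = (∫⁻ x in A, P x Aᶜ ∂pm).toReal / (pm A).toReal} = ∅ := by
        rw [Set.eq_empty_iff_forall_notMem]
        rintro r ⟨A, hA, hApos, hAv, hr⟩
        apply hne
        set g : E → ℝ := A.indicator (fun _ => 1) with hgdef
        have hgm : Measurable g := measurable_const.indicator hA
        have hgL2 : MemLp g 2 pm := (memLp_const (1:ℝ)).indicator hA
        have hgsq : (fun x => g x ^ 2) = g := by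
          funext x
          by_cases hx : x ∈ A <;> simp [hgdef, hx]
        have hgint : ∫ x, g x ∂pm = (pm A).toReal := by
          rw [hgdef, integral_indicator_const (1:ℝ) hA, smul_eq_mul, mul_one]; rfl
        have hp1 : (pm A).toReal < 1 := lt_of_le_of_lt hAv (by linarith)
        have hp0 : 0 < (pm A).toReal := ENNReal.toReal_pos hApos.ne' (measure_ne_top pm A)
        have hvar : 0 < var' pm g := by
          rw [aux_var'_eq pm hgL2, hgsq, hgint]
          nlinarith
        exact ⟨_, A, hA, hAv, g, hgm, hgL2,
          fun x => Set.indicator_nonneg (fun _ _ => zero_le_one) x,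
          Set.support_indicator_subset, hvar, rfl⟩
      rw [this, Real.sInf_empty]
    rw [hcond]
    norm_num
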